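/- Let z = (0,0,1) and F_∞ = {(x,0,0) : x ≤ 0}. For every α ∈ (0,1] and η > 0, the infimum of d(q, K_exp)^α / d(q, F_∞) over all q ∈ {z}⊥ with ‖q‖ ≤ η and q ∉ F_∞ equals 0. Consequently, no Hölderian error bound with any exponent α ∈ (0,1] holds for the pair ({z}⊥, K_exp) near the origin. -/
import Mathlib


def Kexp : Set (EuclideanSpace ℝ (Fin 3)) :=
  {v | (0 < v 1 ∧ v 1 * Real.exp (v 0 / v 1) ≤ v 2) ∨ (v 0 ≤ 0 ∧ 0 ≤ v 2 ∧ v 1 = 0)}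

def Finf : Set (EuclideanSpace ℝ (Fin 3)) := {v | v 0 ≤ 0 ∧ v 1 = 0 ∧ v 2 = 0}

open Real Filter Metric

noncomputable def qwit (c t : ℝ) : EuclideanSpace ℝ (Fin 3) :=
  (WithLp.equiv 2 (Fin 3 → ℝ)).symm ![-c, t, 0]

noncomputable def pwit (c t : ℝ) : EuclideanSpace ℝ (Fin 3) :=
  (WithLp.equiv 2 (Fin 3 → ℝ)).symm ![-c, t, t * Real.exp (-(c / t))]

lemma abs_coord_le_dist (x y : EuclideanSpace ℝ (Fin 3)) (i : Fin 3) :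
    |x i - y i| ≤ dist x y := by
  rw [EuclideanSpace.dist_eq, ← Real.sqrt_sq_eq_abs]
  apply Real.sqrt_le_sqrt
  have := Finset.single_le_sum (f := fun j => dist (x j) (y j) ^ 2)
    (fun j _ => sq_nonneg _) (Finset.mem_univ i)
  simpa [Real.dist_eq, sq_abs] using this

lemma finf_nonempty : Finf.Nonempty := ⟨0, le_refl _, rfl, rfl⟩

lemma witness_props (c t : ℝ) (hc : 0 < c) (ht : 0 < t) (htc : t ≤ c) :
    (qwit c t) 2 = 0 ∧ ‖qwit c t‖ ≤ 2 * c ∧ (qwit c t) ∉ Finf ∧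
    t ≤ Metric.infDist (qwit c t) Finf ∧
    Metric.infDist (qwit c t) Kexp ≤ t * Real.exp (-(c / t)) := by
  have hq0 : (qwit c t) 0 = -c := rfl
  have hq1 : (qwit c t) 1 = t := rfl
  have hq2 : (qwit c t) 2 = 0 := rfl
  refine ⟨hq2, ?_, ?_, ?_, ?_⟩
  · rw [EuclideanSpace.norm_eq,
      show ∑ i, ‖(qwit c t) i‖ ^ 2 = ‖(qwit c t) 0‖^2 + ‖(qwit c t) 1‖^2 + ‖(qwit c t) 2‖^2
        from Fin.sum_univ_three _, hq0, hq1, hq2]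
    have h1 : ‖(-c : ℝ)‖^2 + ‖t‖^2 + ‖(0:ℝ)‖^2 ≤ (2*c)^2 := by
      simp only [Real.norm_eq_abs, sq_abs]
      nlinarith
    calc Real.sqrt (‖(-c : ℝ)‖^2 + ‖t‖^2 + ‖(0:ℝ)‖^2) ≤ Real.sqrt ((2*c)^2) :=
          Real.sqrt_le_sqrt h1
      _ = 2*c := Real.sqrt_sq (by linarith)
  · intro hmem
    have h := hmem.2.1
    rw [hq1] at h
    exact ht.ne' h
  · rw [← not_lt]
    intro h
    rw [Metric.infDist_lt_iff finf_nonempty] at h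
    obtain ⟨y, hy, hlt⟩ := h
    have hd := abs_coord_le_dist (qwit c t) y 1
    rw [hq1, hy.2.1, sub_zero, abs_of_pos ht] at hd
    linarith
  · have hp0 : (pwit c t) 0 = -c := rfl
    have hp1 : (pwit c t) 1 = t := rfl
    have hp2 : (pwit c t) 2 = t * Real.exp (-(c / t)) := rfl
    have hmem : pwit c t ∈ Kexp := by
      left
      refine ⟨by rw [hp1]; exact ht, ?_⟩
      rw [hp0, hp1, hp2, neg_div]
    calc Metric.infDist (qwit c t) Kexp ≤ dist (qwit c t) (pwit c t) :=
          Metric.infDist_le_dist_of_mem hmem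
      _ = t * Real.exp (-(c / t)) := by
          rw [EuclideanSpace.dist_eq,
            show ∑ i, dist ((qwit c t) i) ((pwit c t) i) ^ 2
              = dist ((qwit c t) 0) ((pwit c t) 0) ^ 2
                + dist ((qwit c t) 1) ((pwit c t) 1) ^ 2
                + dist ((qwit c t) 2) ((pwit c t) 2) ^ 2 from Fin.sum_univ_three _,
            hq0, hq1, hq2, hp0, hp1, hp2]
          have hz : (0:ℝ) ≤ t * Real.exp (-(c / t)) :=
            mul_nonneg ht.le (Real.exp_pos _).le
          simp only [dist_self, Real.dist_eq, zero_sub, abs_neg, abs_of_nonneg hz]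
          rw [zero_pow (by norm_num), zero_add, zero_add, Real.sqrt_sq hz]

lemma ratio_tendsto (α c : ℝ) (hα : 0 < α) (hc : 0 < c) :
    Tendsto (fun t : ℝ => (t * Real.exp (-(c / t))) ^ α / t) (nhdsWithin 0 (Set.Ioi 0))
      (nhds 0) := by
  have h1 : Tendsto (fun s : ℝ => s ^ (1 - α) * Real.exp (-(α * c) * s)) atTop (nhds 0) :=
    tendsto_rpow_mul_exp_neg_mul_atTop_nhds_zero (1 - α) (α * c) (by positivity)
  have h2 : Tendsto (fun t : ℝ => (t⁻¹) ^ (1 - α) * Real.exp (-(α * c) * t⁻¹))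
      (nhdsWithin 0 (Set.Ioi 0)) (nhds 0) := h1.comp tendsto_inv_nhdsGT_zero
  refine h2.congr' ?_
  filter_upwards [self_mem_nhdsWithin] with t (ht : 0 < t)
  have hexp : (0:ℝ) ≤ Real.exp (-(c / t)) := (Real.exp_pos _).le
  rw [Real.mul_rpow ht.le hexp, ← Real.exp_mul, Real.inv_rpow ht.le, ← Real.rpow_neg ht.le]
  rw [div_eq_mul_inv, ← Real.rpow_neg_one t, mul_right_comm,
    ← Real.rpow_add ht]
  ring_nf
  rw [Real.rpow_neg_one]

lemma exists_small_ratio (α c ε : ℝ) (hα : 0 < α) (hc : 0 < c) (hε : 0 < ε) :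
    ∃ t : ℝ, 0 < t ∧ t ≤ c ∧ (t * Real.exp (-(c / t))) ^ α / t < ε := by
  have h := ratio_tendsto α c hα hc
  have h2 : ∀ᶠ t in nhdsWithin (0:ℝ) (Set.Ioi 0),
      (t * Real.exp (-(c / t))) ^ α / t < ε := h.eventually_lt_const hε
  have h3 : ∀ᶠ t in nhdsWithin (0:ℝ) (Set.Ioi 0), t ∈ Set.Ioc (0:ℝ) c :=
    Ioc_mem_nhdsGT_of_mem ⟨le_refl _, hc⟩
  obtain ⟨t, ht1, ht2⟩ := (h2.and h3).exists
  exact ⟨t, ht2.1, ht2.2, ht1⟩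

theorem no_holderian_error_bound (α η : ℝ) (hα : 0 < α) (hα1 : α ≤ 1) (hη : 0 < η) :
    sInf {r : ℝ | ∃ q : EuclideanSpace ℝ (Fin 3), q 2 = 0 ∧ ‖q‖ ≤ η ∧ q ∉ Finf ∧
        r = Metric.infDist q Kexp ^ α / Metric.infDist q Finf} = 0 ∧
    ¬∃ κ : ℝ, 0 < κ ∧ ∀ q : EuclideanSpace ℝ (Fin 3), q 2 = 0 → ‖q‖ ≤ η →
        Metric.infDist q Finf ≤ κ * Metric.infDist q Kexp ^ α := by
  set c : ℝ := η / 2 with hc_def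
  have hc : 0 < c := by positivity
  set S := {r : ℝ | ∃ q : EuclideanSpace ℝ (Fin 3), q 2 = 0 ∧ ‖q‖ ≤ η ∧ q ∉ Finf ∧
      r = Metric.infDist q Kexp ^ α / Metric.infDist q Finf} with hS_def
  -- generic membership from a parameter t
  have hmem : ∀ t : ℝ, 0 < t → t ≤ c →
      (Metric.infDist (qwit c t) Kexp ^ α / Metric.infDist (qwit c t) Finf ∈ S) ∧
      Metric.infDist (qwit c t) Kexp ^ α / Metric.infDist (qwit c t) Finf
        ≤ (t * Real.exp (-(c / t))) ^ α / t := by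
    intro t ht htc
    obtain ⟨h2, hnorm, hnot, hF, hK⟩ := witness_props c t hc ht htc
    have hnorm' : ‖qwit c t‖ ≤ η := by rw [hc_def] at hnorm; linarith
    refine ⟨⟨qwit c t, h2, hnorm', hnot, rfl⟩, ?_⟩
    exact div_le_div₀ (by positivity)
      (Real.rpow_le_rpow Metric.infDist_nonneg hK hα.le) ht hF
  have hSne : S.Nonempty := ⟨_, (hmem c hc (le_refl c)).1⟩
  have hSlb : ∀ r ∈ S, (0:ℝ) ≤ r := by
    rintro r ⟨q, -, -, -, rfl⟩
    have h1 : (0:ℝ) ≤ Metric.infDist q Kexp ^ α := Real.rpow_nonneg Metric.infDist_nonneg α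
    exact div_nonneg h1 Metric.infDist_nonneg
  have hsmall : ∀ ε : ℝ, 0 < ε → ∃ r ∈ S, r < ε := by
    intro ε hε
    obtain ⟨t, ht, htc, hlt⟩ := exists_small_ratio α c ε hα hc hε
    obtain ⟨hmem', hle⟩ := hmem t ht htc
    exact ⟨_, hmem', lt_of_le_of_lt hle hlt⟩
  constructor
  · refine le_antisymm ?_ (le_csInf hSne hSlb)
    by_contra h
    push_neg at h
    obtain ⟨r, hrS, hr⟩ := hsmall _ h
    exact absurd (csInf_le ⟨0, hSlb⟩ hrS) (not_le.mpr hr)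
  · rintro ⟨κ, hκ, hbound⟩
    obtain ⟨t, ht, htc, hlt⟩ := exists_small_ratio α c (1/κ) hα hc (by positivity)
    obtain ⟨h2, hnorm, hnot, hF, hK⟩ := witness_props c t hc ht htc
    have hnorm' : ‖qwit c t‖ ≤ η := by rw [hc_def] at hnorm; linarith
    have hb := hbound (qwit c t) h2 hnorm'
    have hdF : 0 < Metric.infDist (qwit c t) Finf := lt_of_lt_of_le ht hF
    have hge : 1 / κ ≤ Metric.infDist (qwit c t) Kexp ^ α / Metric.infDist (qwit c t) Finf := by
      rw [div_le_div_iff₀ hκ hdF]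
      nlinarith
    have hle := (hmem t ht htc).2
    linarith
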